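/- Let Σ be an e-invariant type and suppose e ∈ dcl(Σ). Then Gal^c_L(Σ, e) = Autf_KP(Σ, e)/Autf_L(Σ, e), i.e., the closure of the trivial subgroup of the relativized Lascar group Gal_L(Σ, e) equals the image of the relativized KP automorphism group. -/

import Mathlib

/- Framework: relativized Lascar groups of a first-order theory over a
hyperimaginary, following "Relativized Galois groups of first order theories
over a hyperimaginary" by H. Lee and J. Lee. -/

open FirstOrder Cardinal Pointwise

universe u

namespace RelLascar

variable {L : FirstOrder.Language.{u, u}} {M : Type u} [L.Structure M]

/-- The group of automorphisms of the monster model `M`. -/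
instance : Group (M ≃[L] M) where
  mul f g := f.comp g
  one := FirstOrder.Language.Equiv.refl L M
  inv f := f.symm
  mul_assoc f g h := (FirstOrder.Language.Equiv.comp_assoc h g f).symm
  one_mul := FirstOrder.Language.Equiv.refl_comp
  mul_one := FirstOrder.Language.Equiv.comp_refl
  inv_mul_cancel := FirstOrder.Language.Equiv.symm_comp_self

/-- Automorphisms act on the monster model. -/
instance : MulAction (M ≃[L] M) M where
  smul f x := f x
  one_smul _ := rfl
  mul_smul _ _ _ := rfl

@[simp] theorem autSmul_def (f : M ≃[L] M) (x : M) : f • x = f x := rfl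

/-- The solution set in `M` of a set of formulas in variables `ι` with
parameters `prm : π → M`. -/
def SolSet {ι π : Type u} (p : Set (L.Formula (ι ⊕ π))) (prm : π → M) : Set (ι → M) :=
  {v | ∀ φ ∈ p, φ.Realize (Sum.elim v prm)}

/-- A set of `ι`-tuples is type-definable over the parameters `prm`. -/
def TypeDefinableOver {ι π : Type u} (prm : π → M) (X : Set (ι → M)) : Prop :=
  ∃ p : Set (L.Formula (ι ⊕ π)), X = SolSet p prm

/-- Two tuples have the same (complete) type over `∅`. -/
def SameTp {ι : Type u} (c d : ι → M) : Prop :=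
  ∀ φ : L.Formula ι, φ.Realize c ↔ φ.Realize d

/-- `M` is a monster model with degree of saturation and strong homogeneity `κ`:
`κ` is uncountable, tuples of size `< κ` with the same type are conjugate under an
automorphism, and every partial type in `< κ` variables over `< κ` parameters that
is finitely realized in `M` is realized in `M`.  ("Small" means of size `< κ`.) -/
def IsMonster (κ : Cardinal.{u}) (L : FirstOrder.Language.{u, u}) (M : Type u) [L.Structure M] : Prop :=
  ℵ₀ < κ ∧
  (∀ (ι : Type u) (c d : ι → M), #ι < κ → SameTp (L := L) (M := M) c d →
      ∃ f : M ≃[L] M, ∀ i, f (c i) = d i) ∧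
  (∀ (ι π : Type u) (prm : π → M) (p : Set (L.Formula (ι ⊕ π))), #ι < κ → #π < κ →
      (∀ q : Finset (L.Formula (ι ⊕ π)), ↑q ⊆ p →
        ∃ v : ι → M, ∀ φ ∈ (q : Set (L.Formula (ι ⊕ π))), φ.Realize (Sum.elim v prm)) →
      ∃ v : ι → M, v ∈ SolSet p prm)

variable (κ : Cardinal.{u})

section Hyperimaginary

/- The hyperimaginary `e = a_E`, where `E` is the `∅`-type-definable equivalence
relation defined by the set of formulas `pE` and `a : γ → M`. -/
variable {γ : Type u} (pE : Set (L.Formula (γ ⊕ γ))) (a : γ → M)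

/-- The relation defined by a set of formulas in variables `δ ⊕ δ` (with no
parameters); for `pE` this is the equivalence relation `E`. -/
def Frel {δ : Type u} (pF : Set (L.Formula (δ ⊕ δ))) (x y : δ → M) : Prop :=
  ∀ φ ∈ pF, φ.Realize (Sum.elim x y)

/-- The class of a tuple `x` under the relation defined by `pF`; for an
equivalence relation this is the hyperimaginary `x_F` (as a set of representatives). -/
def Fclass {δ : Type u} (pF : Set (L.Formula (δ ⊕ δ))) (x : δ → M) : Set (δ → M) :=
  {y | Frel pF x y}

/-- `Aut_e(𝔠)`: the subgroup of automorphisms fixing the hyperimaginary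
`e = a_E` setwise. -/
def AutE : Subgroup (M ≃[L] M) := MulAction.stabilizer (M ≃[L] M) (Fclass pE a)

/-- `Aut_e(𝔠)` as a group. -/
abbrev Ge := ↥(AutE pE a)

/-- The hyperimaginary `e` is definable over the tuple `t` (i.e. `e ∈ dcl(t)`):
every automorphism fixing `t` pointwise fixes `e`. -/
def eInDclTuple {ι : Type u} (t : ι → M) : Prop :=
  ∀ f : M ≃[L] M, (∀ i, f (t i) = t i) → f ∈ AutE pE a

/-- The set of elements of `Aut_e(𝔠)` fixing pointwise some small elementary
substructure (model) `N` with `e ∈ dcl(N)`. -/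
def modelFixers : Set (Ge pE a) :=
  {f | ∃ N : L.ElementarySubstructure M, #N < κ ∧
        (∀ g : M ≃[L] M, (∀ x ∈ N, g x = x) → g ∈ AutE pE a) ∧
        ∀ x ∈ N, (f : M ≃[L] M) x = x}

/-- `Autf_L(𝔠, e)`: the normal subgroup of `Aut_e(𝔠)` generated by the
pointwise stabilizers of small models `N` with `e ∈ dcl(N)`. -/
def AutfL : Subgroup (Ge pE a) := Subgroup.normalClosure (modelFixers κ pE a)

/-- `c ≡ᴸ_e d` : the tuples have the same Lascar strong type over `e`. -/
def LEq {ι : Type u} (c d : ι → M) : Prop := ∃ f ∈ AutfL κ pE a, f • c = d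

theorem LEq.refl {ι : Type u} (c : ι → M) : LEq κ pE a c c :=
  ⟨1, one_mem _, one_smul _ _⟩

theorem LEq.symm {ι : Type u} {c d : ι → M} (h : LEq κ pE a c d) : LEq κ pE a d c := by
  obtain ⟨f, hf, rfl⟩ := h
  exact ⟨f⁻¹, inv_mem hf, inv_smul_smul f c⟩

theorem LEq.trans {ι : Type u} {c d e : ι → M} (h1 : LEq κ pE a c d)
    (h2 : LEq κ pE a d e) : LEq κ pE a c e := by
  obtain ⟨f, hf, rfl⟩ := h1
  obtain ⟨g, hg, rfl⟩ := h2
  exact ⟨g * f, mul_mem hg hf, (mul_smul g f c).symm ▸ rfl⟩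

end Hyperimaginary

section Sigma

variable {γ : Type u} (pE : Set (L.Formula (γ ⊕ γ))) (a : γ → M)
variable {V β : Type u} {pS : Set (L.Formula (V ⊕ β))} {bp : β → M}

/-- The solution set `Σ(𝔠)` of the partial type `Σ` (given by formulas `pS` over
the parameters `bp`). -/
abbrev Sol (pS : Set (L.Formula (V ⊕ β))) (bp : β → M) : Set (V → M) := SolSet pS bp

/-- The type of realizations of `Σ`. -/
abbrev SolT (pS : Set (L.Formula (V ⊕ β))) (bp : β → M) := ↥(Sol pS bp)

variable (pS bp) in
/-- The partial type `Σ` is `e`-invariant. -/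
def SolInv : Prop := ∀ (g : Ge pE a) (v : V → M), v ∈ Sol pS bp → g • v ∈ Sol pS bp

/-- The restriction homomorphism `Aut_e(𝔠) → Perm(Σ(𝔠))`, `f ↦ f ↾ Σ(𝔠)`. -/
def resPerm (hInv : SolInv pE a pS bp) : Ge pE a →* Equiv.Perm (SolT pS bp) where
  toFun g :=
    { toFun := fun v => ⟨g • (v : V → M), hInv g v v.2⟩
      invFun := fun v => ⟨g⁻¹ • (v : V → M), hInv g⁻¹ v v.2⟩
      left_inv := fun v => Subtype.ext (inv_smul_smul g (v : V → M))
      right_inv := fun v => Subtype.ext (smul_inv_smul g (v : V → M)) }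
  map_one' := Equiv.ext fun v => Subtype.ext (one_smul (Ge pE a) (v : V → M))
  map_mul' g h := Equiv.ext fun v => Subtype.ext (mul_smul g h (v : V → M))

/-- `Aut_e(Σ) = {f ↾ Σ(𝔠) : f ∈ Aut_e(𝔠)}`, as a subgroup of the permutations of
`Σ(𝔠)`. -/
def AutES (hInv : SolInv pE a pS bp) : Subgroup (Equiv.Perm (SolT pS bp)) :=
  (resPerm pE a hInv).range

/-- `Aut_e(Σ)` as a group. -/
abbrev GS (hInv : SolInv pE a pS bp) := ↥(AutES pE a hInv)

/-- The restriction map `ξ : Aut_e(𝔠) → Aut_e(Σ)`. -/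
def toGS (hInv : SolInv pE a pS bp) : Ge pE a →* GS pE a hInv :=
  (resPerm pE a hInv).rangeRestrict

/-- A tuple of realizations of `Σ`, flattened to a tuple of elements of `M`. -/
def flat {ι : Type u} (c : ι → SolT pS bp) : ι × V → M := fun p => (c p.1 : V → M) p.2

theorem flat_toGS_smul (hInv : SolInv pE a pS bp) {ι : Type u} (g : Ge pE a)
    (c : ι → SolT pS bp) : flat ((toGS pE a hInv g) • c) = g • flat c := rfl

theorem flat_smul_of_res (hInv : SolInv pE a pS bp) {ι : Type u} {τ : GS pE a hInv}
    {g : Ge pE a} (hg : resPerm pE a hInv g = ↑τ) (c : ι → SolT pS bp) :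
    flat (τ • c) = g • flat c := by
  have : τ = toGS pE a hInv g := Subtype.ext hg.symm
  subst this
  rfl

/-- `Autf_L(Σ, e)`: the subgroup of `Aut_e(Σ)` consisting of those restricted
automorphisms `σ` such that every small tuple of realizations of `Σ` has the same
Lascar strong type over `e` as its image under `σ`. -/
def AutfLS (hInv : SolInv pE a pS bp) : Subgroup (GS pE a hInv) where
  carrier := {σ | ∀ (ι : Type u), #ι < κ → ∀ c : ι → SolT pS bp,
      LEq κ pE a (flat c) (flat (σ • c))}
  one_mem' := by
    intro ι _ c
    rw [one_smul]
    exact LEq.refl κ pE a _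
  mul_mem' := by
    intro σ τ hσ hτ ι hι c
    rw [mul_smul]
    exact LEq.trans κ pE a (hτ ι hι c) (hσ ι hι (τ • c))
  inv_mem' := by
    intro σ hσ ι hι c
    have h := hσ ι hι (σ⁻¹ • c)
    rw [smul_inv_smul] at h
    exact LEq.symm κ pE a h

theorem AutfLS_normal (hInv : SolInv pE a pS bp) : (AutfLS κ pE a hInv).Normal := by
  constructor
  intro σ hσ τ ι hι c
  obtain ⟨g, hg⟩ := τ.2
  have hginv : resPerm pE a hInv g⁻¹ = ↑τ⁻¹ := by
    rw [map_inv, hg]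
    rfl
  obtain ⟨f, hf, hfe⟩ := hσ ι hι (τ⁻¹ • c)
  refine ⟨g * f * g⁻¹, (Subgroup.normalClosure_normal).conj_mem f hf g, ?_⟩
  have h1 : flat (τ⁻¹ • c) = g⁻¹ • flat c := flat_smul_of_res pE a hInv hginv c
  have h2 : flat ((τ * σ * τ⁻¹) • c) = g • flat (σ • τ⁻¹ • c) := by
    rw [mul_smul, mul_smul]
    exact flat_smul_of_res pE a hInv hg _
  rw [h2, ← hfe, h1, ← mul_smul, ← mul_smul]

/-- The relativized Lascar group `Gal_L(Σ, e) = Aut_e(Σ) / Autf_L(Σ, e)`. -/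
def GalL (hInv : SolInv pE a pS bp) := GS pE a hInv ⧸ AutfLS κ pE a hInv

/-- The projection `π_b : Aut_e(Σ) → Gal_L(Σ, e)`. -/
def projb (hInv : SolInv pE a pS bp) : GS pE a hInv → GalL κ pE a hInv :=
  QuotientGroup.mk

/-- The projection `π_Σ : Aut_e(𝔠) → Gal_L(Σ, e)`. -/
def projS (hInv : SolInv pE a pS bp) : Ge pE a → GalL κ pE a hInv :=
  fun g => projb κ pE a hInv (toGS pE a hInv g)

/-- A Lascar tuple in `Σ` over `e`: a small tuple `b` of realizations of `Σ` such
that `Autf_L(Σ, e) = {σ ∈ Aut_e(Σ) : b ≡ᴸ_e σ(b)}`. -/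
def IsLascarTuple (hInv : SolInv pE a pS bp) {ιb : Type u} (b : ιb → SolT pS bp) : Prop :=
  #ιb < κ ∧ ∀ σ : GS pE a hInv,
    σ ∈ AutfLS κ pE a hInv ↔ LEq κ pE a (flat b) (flat (σ • b))

variable (pS bp) in
/-- `e ∈ dcl(Σ)`: there is a small tuple of realizations of `Σ` over which `e` is
definable. -/
def eInDclSigma : Prop :=
  ∃ (ι : Type u) (c : ι → SolT pS bp), #ι < κ ∧ eInDclTuple pE a (flat c)

/-- The complete type of the tuple `v` over the parameters `prm` (with both
indexed by `ι`): the set of formulas realized by `v` with parameters `prm`. -/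
def tpOver {ι : Type u} (prm v : ι → M) : Set (L.Formula (ι ⊕ ι)) :=
  {φ | φ.Realize (Sum.elim v prm)}

/-- The type space `S_b(b) = {tp(f(b)/b) : f ∈ Aut_e(𝔠)}` over a tuple `b` of
realizations of `Σ`. -/
def Sb {ιb : Type u} (b : ιb → SolT pS bp) :
    Set (Set (L.Formula ((ιb × V) ⊕ (ιb × V)))) :=
  Set.range fun g : Ge pE a => tpOver (flat b) (g • flat b)

/-- The logic topology on a set of types: the subspace topology induced from the
product topology on `Formula → Bool` via characteristic functions. -/
noncomputable def typeSetTop {F : Type u} (X : Set (Set F)) : TopologicalSpace ↥X :=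
  TopologicalSpace.induced
    (fun p (φ : F) => (p : Set F).boolIndicator φ) inferInstance

/-- The map `ν_b : S_b(b) → Gal_L(Σ, e)`, `tp(σ(b)/b) ↦ [σ]`. -/
noncomputable def nub (hInv : SolInv pE a pS bp) {ιb : Type u} (b : ιb → SolT pS bp) :
    ↥(Sb pE a b) → GalL κ pE a hInv :=
  fun p => projS κ pE a hInv (Set.mem_range.mp p.2).choose

/-- The topology `𝔱_b` on the relativized Lascar group `Gal_L(Σ, e)`: the quotient
topology induced by `ν_b` from the logic topology on `S_b(b)`. -/
noncomputable def galTopb (hInv : SolInv pE a pS bp) {ιb : Type u}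
    (b : ιb → SolT pS bp) : TopologicalSpace (GalL κ pE a hInv) :=
  (typeSetTop (Sb pE a b)).coinduced (nub κ pE a hInv b)

end Sigma

section GalT

variable {γ : Type u} (pE : Set (L.Formula (γ ⊕ γ))) (a : γ → M)

/-- The Lascar group `Gal_L(T, e) = Aut_e(𝔠) / Autf_L(𝔠, e)`. -/
def GalT := Ge pE a ⧸ AutfL κ pE a

/-- The projection `π : Aut_e(𝔠) → Gal_L(T, e)`. -/
def projT : Ge pE a → GalT κ pE a := QuotientGroup.mk

/-- The type space `S_N(N) = {tp(f(N)/N) : f ∈ Aut_e(𝔠)}` over a small model `N`. -/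
def SMod (N : L.ElementarySubstructure M) : Set (Set (L.Formula (↥N ⊕ ↥N))) :=
  Set.range fun g : Ge pE a =>
    tpOver (Subtype.val : ↥N → M) (g • (Subtype.val : ↥N → M))

/-- The map `ν : S_N(N) → Gal_L(T, e)`, `tp(f(N)/N) ↦ [f]`. -/
noncomputable def nuT (N : L.ElementarySubstructure M) :
    ↥(SMod pE a N) → GalT κ pE a :=
  fun p => projT κ pE a (Set.mem_range.mp p.2).choose

/-- The standard quotient topology on the Lascar group `Gal_L(T, e)` induced via
the type space over a small model `N` (with `e ∈ dcl(N)`). -/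
noncomputable def galTopT (N : L.ElementarySubstructure M) :
    TopologicalSpace (GalT κ pE a) :=
  (typeSetTop (SMod pE a N)).coinduced (nuT κ pE a N)

/-- `Autf_KP(𝔠, e)`: the preimage under `π` of the closure of the identity in
`Gal_L(T, e)`. -/
noncomputable def AutfKPset (N : L.ElementarySubstructure M) : Set (Ge pE a) :=
  projT κ pE a ⁻¹' (@closure _ (galTopT κ pE a N) {projT κ pE a 1})

/-- `Autf_S(𝔠, e)`: the preimage under `π` of the connected component of the
identity in `Gal_L(T, e)`. -/
noncomputable def AutfSset (N : L.ElementarySubstructure M) : Set (Ge pE a) :=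
  projT κ pE a ⁻¹' (@connectedComponent _ (galTopT κ pE a N) (projT κ pE a 1))

/-- `c ≡ᴷᴾ_e d` : the tuples have the same KP strong type over `e`. -/
def KPeq (N : L.ElementarySubstructure M) {ι : Type u} (c d : ι → M) : Prop :=
  ∃ f ∈ AutfKPset κ pE a N, f • c = d

/-- `c ≡ˢ_e d` : the tuples have the same Shelah strong type over `e`. -/
def Seq (N : L.ElementarySubstructure M) {ι : Type u} (c d : ι → M) : Prop :=
  ∃ f ∈ AutfSset κ pE a N, f • c = d

end GalT

section Relativized

variable {γ : Type u} (pE : Set (L.Formula (γ ⊕ γ))) (a : γ → M)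
variable {V β : Type u} {pS : Set (L.Formula (V ⊕ β))} {bp : β → M}

/-- `Autf_KP(Σ, e)`: the set of restricted automorphisms fixing the KP strong
type of every small tuple of realizations of `Σ`. -/
noncomputable def AutfKPSset (hInv : SolInv pE a pS bp) (N : L.ElementarySubstructure M) :
    Set (GS pE a hInv) :=
  {σ | ∀ (ι : Type u), #ι < κ → ∀ c : ι → SolT pS bp,
      KPeq κ pE a N (flat c) (flat (σ • c))}

/-- `Autf_S(Σ, e)`: the set of restricted automorphisms fixing the Shelah strong
type of every small tuple of realizations of `Σ`. -/
noncomputable def AutfSSset (hInv : SolInv pE a pS bp) (N : L.ElementarySubstructure M) :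
    Set (GS pE a hInv) :=
  {σ | ∀ (ι : Type u), #ι < κ → ∀ c : ι → SolT pS bp,
      Seq κ pE a N (flat c) (flat (σ • c))}

/-- The orbit under `Aut_e(𝔠)` of the hyperimaginary given by the class of `x`
under the relation defined by `pF` is small ("`x_F` is bounded over `e`"). -/
def BoundedClass {δ : Type u} (pF : Set (L.Formula (δ ⊕ δ))) (x : δ → M) : Prop :=
  #↥(Set.range fun g : Ge pE a => g • Fclass pF x) < κ

/-- The orbit under `Aut_e(𝔠)` of the hyperimaginary given by the class of `x` is
finite ("`x_F` is algebraic over `e`"). -/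
def FiniteClass {δ : Type u} (pF : Set (L.Formula (δ ⊕ δ))) (x : δ → M) : Prop :=
  (Set.range fun g : Ge pE a => g • Fclass pF x).Finite

/-- `f` fixes the hyperimaginary given by the class of `x` (setwise). -/
def FixesClass (f : Ge pE a) {δ : Type u} (pF : Set (L.Formula (δ ⊕ δ)))
    (x : δ → M) : Prop :=
  f • Fclass pF x = Fclass pF x

variable (pS bp) in
/-- `f` fixes every hyperimaginary that is bounded over `e` and has a
representative which is a small tuple of realizations of `Σ`, i.e. `f` fixes
`bdd(e) ∩ Σ` pointwise. -/
def fixesAllBddS (f : Ge pE a) : Prop :=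
  ∀ (ι : Type u) (pF : Set (L.Formula ((ι × V) ⊕ (ι × V)))) (c : ι → SolT pS bp),
    #ι < κ → Equivalence (Frel (M := M) pF) → BoundedClass κ pE a pF (flat c) →
    FixesClass pE a f pF (flat c)

variable (pS bp) in
/-- `f` fixes every hyperimaginary that is algebraic over `e` and has a
representative which is a small tuple of realizations of `Σ`, i.e. `f` fixes
`acl(e) ∩ Σ` pointwise. -/
def fixesAllAclS (f : Ge pE a) : Prop :=
  ∀ (ι : Type u) (pF : Set (L.Formula ((ι × V) ⊕ (ι × V)))) (c : ι → SolT pS bp),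
    #ι < κ → Equivalence (Frel (M := M) pF) → FiniteClass pE a pF (flat c) →
    FixesClass pE a f pF (flat c)

end Relativized


section More

variable {γ : Type u} (pE : Set (L.Formula (γ ⊕ γ))) (a : γ → M)
variable {V β : Type u} {pS : Set (L.Formula (V ⊕ β))} {bp : β → M}

theorem mem_AutfLS_iff (hInv : SolInv pE a pS bp) {σ : GS pE a hInv} :
    σ ∈ AutfLS κ pE a hInv ↔ ∀ (ι : Type u), #ι < κ → ∀ c : ι → SolT pS bp,
      LEq κ pE a (flat c) (flat (σ • c)) := Iff.rfl

theorem toGS_mem_autfLS (hInv : SolInv pE a pS bp) {f : Ge pE a}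
    (hf : f ∈ AutfL κ pE a) : toGS pE a hInv f ∈ AutfLS κ pE a hInv :=
  (mem_AutfLS_iff κ pE a hInv).mpr
    (fun ι _ c => ⟨f, hf, (flat_toGS_smul pE a hInv f c).symm⟩)

instance AutfL_normal : (AutfL κ pE a).Normal :=
  Subgroup.normalClosure_normal

/-- The group structure of the relativized Lascar group `Gal_L(Σ, e)`. -/
noncomputable def galLGroup (hInv : SolInv pE a pS bp) : Group (GalL κ pE a hInv) :=
  @QuotientGroup.Quotient.group _ _ (AutfLS κ pE a hInv) (AutfLS_normal κ pE a hInv)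

/-- The natural projection `ξ_L : Gal_L(T, e) → Gal_L(Σ, e)`. -/
noncomputable def xiL (hInv : SolInv pE a pS bp) : GalT κ pE a → GalL κ pE a hInv :=
  haveI := AutfLS_normal κ pE a hInv
  ⇑(QuotientGroup.map (AutfL κ pE a) (AutfLS κ pE a hInv) (toGS pE a hInv)
    (fun _ hf => Subgroup.mem_comap.mpr (toGS_mem_autfLS κ pE a hInv hf)))

/-- The orbit equivalence relation `≡ᴴ` of a set `H` of restricted automorphisms,
on tuples of realizations of `Σ`. -/
def orbEq {hInv : SolInv pE a pS bp} (H : Set (GS pE a hInv)) {ι : Type u}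
    (c d : ι → SolT pS bp) : Prop :=
  ∃ h ∈ H, h • c = d

end More



section Aux12

variable {γ : Type u} (pE : Set (L.Formula (γ ⊕ γ))) (a : γ → M)
variable {V β : Type u} {pS : Set (L.Formula (V ⊕ β))} {bp : β → M}

/-! ### Generalities -/

theorem aut_mul_apply (f g : M ≃[L] M) (x : M) : (f * g) x = f (g x) := rfl

theorem aut_one_apply (x : M) : (1 : M ≃[L] M) x = x := rfl

theorem aut_inv_apply (f : M ≃[L] M) (x : M) : f⁻¹ (f x) = x :=
  congrArg (fun h : M ≃[L] M => h x) (inv_mul_cancel f)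

theorem aut_apply_inv (f : M ≃[L] M) (x : M) : f (f⁻¹ x) = x :=
  congrArg (fun h : M ≃[L] M => h x) (mul_inv_cancel f)

theorem ge_smul_apply {ι : Type u} (g : Ge pE a) (v : ι → M) (i : ι) :
    (g • v) i = (g : M ≃[L] M) (v i) := rfl

theorem realize_aut {ι : Type u} (f : M ≃[L] M) {φ : L.Formula ι} {v : ι → M} :
    φ.Realize (fun i => f (v i)) ↔ φ.Realize v := by
  exact FirstOrder.Language.StrongHomClass.realize_formula (g := f) φ (v := v)

theorem sum_mk_lt {α₁ α₂ : Type u} (hκ : ℵ₀ < κ) (h1 : #α₁ < κ) (h2 : #α₂ < κ) :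
    #(α₁ ⊕ α₂) < κ := by
  rw [Cardinal.mk_sum, Cardinal.lift_id, Cardinal.lift_id]
  exact Cardinal.add_lt_of_lt hκ.le h1 h2

theorem prod_mk_lt {α₁ α₂ : Type u} (hκ : ℵ₀ < κ) (h1 : #α₁ < κ) (h2 : #α₂ < κ) :
    #(α₁ × α₂) < κ := by
  rw [Cardinal.mk_prod, Cardinal.lift_id, Cardinal.lift_id]
  exact Cardinal.mul_lt_of_lt hκ.le h1 h2

/-! ### Classes and automorphisms -/

theorem smul_fclass {δ : Type u} (pF : Set (L.Formula (δ ⊕ δ))) (f : M ≃[L] M) (x : δ → M) :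
    f • Fclass (M := M) pF x = Fclass pF (fun i => f (x i)) := by
  ext y
  constructor
  · rintro ⟨z, hz, rfl⟩
    intro φ hφ
    have h1 := hz φ hφ
    have h2 : (fun j => f (Sum.elim x z j)) = Sum.elim (fun i => f (x i)) (f • z) := by
      funext j; cases j <;> rfl
    have h3 := (realize_aut f).mpr h1
    rw [h2] at h3
    exact h3
  · intro hy
    refine ⟨f⁻¹ • y, ?_, smul_inv_smul f y⟩
    intro φ hφ
    have h1 := hy φ hφ
    have h2 : (fun j => f (Sum.elim x (f⁻¹ • y) j)) = Sum.elim (fun i => f (x i)) y := by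
      funext j; cases j with
      | inl i => rfl
      | inr i => exact aut_apply_inv f (y i)
    rw [← h2] at h1
    exact (realize_aut f).mp h1

theorem mem_AutE_of_witness (hE : Equivalence (Frel (M := M) pE)) (f : M ≃[L] M)
    {w : γ → M} (h1 : w ∈ Fclass pE a) (h2 : w ∈ f • Fclass pE a) : f ∈ AutE pE a := by
  rw [smul_fclass] at h2
  rw [AutE, MulAction.mem_stabilizer_iff, smul_fclass]
  ext z
  exact ⟨fun hz => hE.trans (hE.trans h1 (hE.symm h2)) hz,
    fun hz => hE.trans (hE.trans h2 (hE.symm h1)) hz⟩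

/-! ### The class of `a` is type-definable over a small model `N` with `e ∈ dcl(N)` -/

theorem class_typeDef (hM : IsMonster κ L M) (hγ : #γ < κ)
    (N : L.ElementarySubstructure M) (hN : #N < κ)
    (hNdcl : ∀ g : M ≃[L] M, (∀ x ∈ N, g x = x) → g ∈ AutE pE a) :
    ∃ Θ : Set (L.Formula (γ ⊕ ↥N)), ∀ y : γ → M,
      (y ∈ Fclass pE a ↔ ∀ φ ∈ Θ, φ.Realize (Sum.elim y (Subtype.val : ↥N → M))) := by
  classical
  set vN : ↥N → M := (Subtype.val : ↥N → M) with hvN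
  refine ⟨{φ | ∀ y ∈ Fclass (M := M) pE a, φ.Realize (Sum.elim y vN)},
    fun y => ⟨fun hy φ hφ => hφ y hy, fun hy => ?_⟩⟩
  set m1 : γ ⊕ γ → γ ⊕ (γ ⊕ ↥N) := Sum.elim (fun i => Sum.inr (Sum.inl i)) Sum.inl with hm1
  set m2 : γ ⊕ ↥N → γ ⊕ (γ ⊕ ↥N) := Sum.map id Sum.inr with hm2
  set src : Set (L.Formula (γ ⊕ ↥N)) := {ψ | ψ.Realize (Sum.elim y vN)} with hsrc
  set Γ : Set (L.Formula (γ ⊕ (γ ⊕ ↥N))) :=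
    ((fun φ : L.Formula (γ ⊕ γ) => φ.relabel m1) '' pE) ∪
      ((fun ψ : L.Formula (γ ⊕ ↥N) => ψ.relabel m2) '' src) with hΓ
  set prm : (γ ⊕ ↥N) → M := Sum.elim a vN with hprm
  have key1 : ∀ (w : γ → M) (φ : L.Formula (γ ⊕ γ)),
      (φ.relabel m1).Realize (Sum.elim w prm) ↔ φ.Realize (Sum.elim a w) := by
    intro w φ
    rw [FirstOrder.Language.Formula.realize_relabel]
    have h : (Sum.elim w prm) ∘ m1 = Sum.elim a w := by funext j; cases j <;> rfl
    rw [h]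
  have key2 : ∀ (w : γ → M) (ψ : L.Formula (γ ⊕ ↥N)),
      (ψ.relabel m2).Realize (Sum.elim w prm) ↔ ψ.Realize (Sum.elim w vN) := by
    intro w ψ
    rw [FirstOrder.Language.Formula.realize_relabel]
    have h : (Sum.elim w prm) ∘ m2 = Sum.elim w vN := by funext j; cases j <;> rfl
    rw [h]
  have hfin : ∀ q : Finset (L.Formula (γ ⊕ (γ ⊕ ↥N))), ↑q ⊆ Γ →
      ∃ v : γ → M, ∀ φ ∈ (q : Set (L.Formula (γ ⊕ (γ ⊕ ↥N)))), φ.Realize (Sum.elim v prm) := by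
    intro q hq
    by_contra hcon
    push_neg at hcon
    have hsel : ∀ ψ : L.Formula (γ ⊕ (γ ⊕ ↥N)), ∃ θ : L.Formula (γ ⊕ ↥N),
        θ ∈ src ∧ ((∃ θ' ∈ src, θ'.relabel m2 = ψ) → θ.relabel m2 = ψ) := by
      intro ψ
      by_cases h : ∃ θ' ∈ src, θ'.relabel m2 = ψ
      · obtain ⟨θ', hθ', hθ'2⟩ := h
        exact ⟨θ', hθ', fun _ => hθ'2⟩
      · refine ⟨⊤, ?_, fun h' => absurd h' h⟩
        simp only [hsrc, Set.mem_setOf_eq, FirstOrder.Language.Formula.realize_top]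
    choose sel hsel1 hsel2 using hsel
    set Ψ : Finset (L.Formula (γ ⊕ ↥N)) := q.image sel with hΨ
    have hclass : ∀ w ∈ Fclass (M := M) pE a, ¬ ∀ θ ∈ Ψ, θ.Realize (Sum.elim w vN) := by
      intro w hw hall
      obtain ⟨φ, hφq, hφn⟩ := hcon w
      apply hφn
      rcases hq hφq with h1 | h2
      · obtain ⟨φ₀, hφ₀, rfl⟩ := h1
        exact (key1 w φ₀).mpr (hw φ₀ hφ₀)
      · obtain ⟨θ', hθ', hrel⟩ := h2
        have hs2 := hsel2 φ ⟨θ', hθ', hrel⟩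
        have hmem : sel φ ∈ Ψ := Finset.mem_image_of_mem sel hφq
        have := hall (sel φ) hmem
        rw [← hs2]
        exact (key2 w (sel φ)).mpr this
    set φstar : L.Formula (γ ⊕ ↥N) :=
      (FirstOrder.Language.BoundedFormula.iInf (fun θ : ↥Ψ => (θ : L.Formula (γ ⊕ ↥N)))).not with hφstar
    have hstar_realize : ∀ w : γ → M,
        φstar.Realize (Sum.elim w vN) ↔ ¬ ∀ θ ∈ Ψ, θ.Realize (Sum.elim w vN) := by
      intro w
      rw [hφstar]
      constructor
      · intro h hall
        apply FirstOrder.Language.BoundedFormula.realize_not.mp h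
        exact FirstOrder.Language.BoundedFormula.realize_iInf.mpr
          (fun θ => hall θ.1 θ.2)
      · intro h
        apply FirstOrder.Language.BoundedFormula.realize_not.mpr
        intro hin
        exact h (fun θ hθ => FirstOrder.Language.BoundedFormula.realize_iInf.mp hin ⟨θ, hθ⟩)
    have hstarΘ : ∀ w ∈ Fclass (M := M) pE a, φstar.Realize (Sum.elim w vN) :=
      fun w hw => (hstar_realize w).mpr (hclass w hw)
    have := hy φstar hstarΘ
    rw [hstar_realize y] at this
    exact this (fun θ hθ => by
      obtain ⟨ψ, _, rfl⟩ := Finset.mem_image.mp hθ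
      exact hsel1 ψ)
  obtain ⟨z₀, hz₀⟩ := hM.2.2 γ (γ ⊕ ↥N) prm Γ hγ (sum_mk_lt κ hM.1 hγ hN) hfin
  have hz₀class : z₀ ∈ Fclass (M := M) pE a := by
    intro φ hφ
    exact (key1 z₀ φ).mp (hz₀ (φ.relabel m1) (Or.inl ⟨φ, hφ, rfl⟩))
  have hsame : SameTp (L := L) (M := M) (Sum.elim z₀ vN) (Sum.elim y vN) := by
    intro θ
    constructor
    · intro h
      by_contra hny
      have hnot : θ.not ∈ src := by
        simp only [hsrc, Set.mem_setOf_eq]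
        exact FirstOrder.Language.Formula.realize_not.mpr hny
      have := (key2 z₀ θ.not).mp (hz₀ (θ.not.relabel m2) (Or.inr ⟨θ.not, hnot, rfl⟩))
      exact FirstOrder.Language.Formula.realize_not.mp this h
    · intro h
      exact (key2 z₀ θ).mp (hz₀ (θ.relabel m2) (Or.inr ⟨θ, h, rfl⟩))
  obtain ⟨f, hf⟩ := hM.2.1 (γ ⊕ ↥N) _ _ (sum_mk_lt κ hM.1 hγ hN) hsame
  have hfAutE : f ∈ AutE pE a := hNdcl f (fun x hx => hf (Sum.inr ⟨x, hx⟩))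
  have hstab : f • Fclass (M := M) pE a = Fclass pE a :=
    MulAction.mem_stabilizer_iff.mp hfAutE
  rw [← hstab]
  refine ⟨z₀, hz₀class, ?_⟩
  funext i
  exact hf (Sum.inl i)

end Aux12

section Aux12b

variable {γ : Type u} (pE : Set (L.Formula (γ ⊕ γ))) (a : γ → M)
variable {V β : Type u} {pS : Set (L.Formula (V ⊕ β))} {bp : β → M} {ιb : Type u}

/-! ### The indicator embedding of a type space into the Cantor cube -/

/-- The indicator embedding of a set of types into the Cantor cube. -/
noncomputable def ind {F : Type u} (X : Set (Set F)) : ↥X → (F → Bool) :=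
  fun p φ => (p : Set F).boolIndicator φ

theorem ind_injective {F : Type u} (X : Set (Set F)) : Function.Injective (ind X) := by
  intro p q h
  apply Subtype.ext
  ext φ
  have hh : (p : Set F).boolIndicator φ = (q : Set F).boolIndicator φ := congrFun h φ
  rw [(p : Set F).mem_iff_boolIndicator φ, (q : Set F).mem_iff_boolIndicator φ, hh]

theorem isInducing_ind {F : Type u} (X : Set (Set F)) :
    @Topology.IsInducing _ _ (typeSetTop X) _ (ind X) :=
  @Topology.IsInducing.mk _ _ (typeSetTop X) _ _ rfl

theorem t2_typeSetTop {F : Type u} (X : Set (Set F)) : @T2Space _ (typeSetTop X) := by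
  letI := typeSetTop X
  exact Topology.IsEmbedding.t2Space ⟨isInducing_ind X, ind_injective X⟩

theorem compactSpace_of_isClosed_range_ind {F : Type u} (X : Set (Set F))
    (h : IsClosed (Set.range (ind X))) : @CompactSpace _ (typeSetTop X) := by
  letI := typeSetTop X
  have hco : IsCompact (Set.range (ind X)) := h.isCompact
  constructor
  apply (isInducing_ind X).isCompact_iff.mpr
  rwa [Set.image_univ]

/-! ### Restriction maps between type spaces -/

/-- Restriction of a type to a subtuple given by the reindexing `j`. -/
def restr {ι ι' : Type u} (j : ι' → ι) (q : Set (L.Formula (ι ⊕ ι))) :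
    Set (L.Formula (ι' ⊕ ι')) :=
  {φ | φ.relabel (Sum.map j j) ∈ q}

theorem restr_tpOver {ι ι' : Type u} (j : ι' → ι) (t : ι → M) (s : ι' → M)
    (hj : ∀ i, t (j i) = s i) (g : Ge pE a) :
    restr (L := L) j (tpOver t (g • t)) = tpOver s (g • s) := by
  ext φ
  show (φ.relabel (Sum.map j j)).Realize (Sum.elim (g • t) t) ↔
    φ.Realize (Sum.elim (g • s) s)
  rw [FirstOrder.Language.Formula.realize_relabel]
  have h : (Sum.elim (g • t) t) ∘ (Sum.map j j) = Sum.elim (g • s) s := by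
    funext x
    cases x with
    | inl i =>
      show (g • t) (j i) = (g • s) i
      rw [ge_smul_apply, ge_smul_apply, hj]
    | inr i => exact hj i
  rw [h]

theorem continuous_restr_map {F F' : Type u} (X : Set (Set F)) (Y : Set (Set F'))
    (r : ↥X → ↥Y) (ρ : F' → F)
    (hr : ∀ (q : ↥X) (φ : F'), φ ∈ (r q : Set F') ↔ ρ φ ∈ (q : Set F)) :
    @Continuous _ _ (typeSetTop X) (typeSetTop Y) r := by
  letI := typeSetTop X
  letI := typeSetTop Y
  apply continuous_induced_rng.mpr
  have heq : (ind Y) ∘ r = fun q φ => ind X q (ρ φ) := by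
    funext q φ
    show ((r q : Set F')).boolIndicator φ = ((q : Set F)).boolIndicator (ρ φ)
    by_cases h : ρ φ ∈ (q : Set F)
    · rw [((r q : Set F').mem_iff_boolIndicator φ).mp ((hr q φ).mpr h),
        ((q : Set F).mem_iff_boolIndicator (ρ φ)).mp h]
    · rw [((r q : Set F').notMem_iff_boolIndicator φ).mp (fun hm => h ((hr q φ).mp hm)),
        ((q : Set F).notMem_iff_boolIndicator (ρ φ)).mp h]
  show Continuous ((ind Y) ∘ r)
  rw [heq]
  exact continuous_pi fun φ => (continuous_apply (ρ φ)).comp continuous_induced_dom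

/-! ### The combined tuple `N ⌢ b` and its type space -/

/-- The tuple combining an enumeration of `N` and the tuple `flat b`. -/
def ttup (N : L.ElementarySubstructure M) (b : ιb → SolT pS bp) : ↥N ⊕ ιb × V → M :=
  Sum.elim (Subtype.val : ↥N → M) (flat b)

/-- The type space over the combined tuple. -/
def St (N : L.ElementarySubstructure M) (b : ιb → SolT pS bp) :
    Set (Set (L.Formula ((↥N ⊕ ιb × V) ⊕ (↥N ⊕ ιb × V)))) :=
  Set.range fun g : Ge pE a => tpOver (ttup N b) (g • ttup N b)

/-- Restriction from the combined type space to the type space over `N`. -/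
def resN (N : L.ElementarySubstructure M) (b : ιb → SolT pS bp) :
    ↥(St pE a N b) → ↥(SMod pE a N) := fun q =>
  ⟨restr (Sum.inl : ↥N → ↥N ⊕ ιb × V) (q : Set (L.Formula ((↥N ⊕ ιb × V) ⊕ (↥N ⊕ ιb × V)))), by
    obtain ⟨g, hg⟩ := q.2
    exact ⟨g, by
      have hg' : tpOver (ttup N b) (g • ttup N b) = q.1 := hg
      rw [← hg', restr_tpOver pE a Sum.inl (ttup N b) (Subtype.val : ↥N → M) (fun i => rfl) g]⟩⟩

/-- Restriction from the combined type space to the type space over `b`. -/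
def resb (N : L.ElementarySubstructure M) (b : ιb → SolT pS bp) :
    ↥(St pE a N b) → ↥(Sb pE a b) := fun q =>
  ⟨restr (Sum.inr : ιb × V → ↥N ⊕ ιb × V) (q : Set (L.Formula ((↥N ⊕ ιb × V) ⊕ (↥N ⊕ ιb × V)))), by
    obtain ⟨g, hg⟩ := q.2
    exact ⟨g, by
      have hg' : tpOver (ttup N b) (g • ttup N b) = q.1 := hg
      rw [← hg', restr_tpOver pE a Sum.inr (ttup N b) (flat b) (fun i => rfl) g]⟩⟩

end Aux12b

section Aux12c

variable {γ : Type u} (pE : Set (L.Formula (γ ⊕ γ))) (a : γ → M)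
variable {V β : Type u} {pS : Set (L.Formula (V ⊕ β))} {bp : β → M} {ιb : Type u}

theorem isClosed_range_ind_St (hM : IsMonster κ L M) (hγ : #γ < κ)
    (hE : Equivalence (Frel (M := M) pE))
    (N : L.ElementarySubstructure M) (hN : #N < κ)
    (hNdcl : ∀ g : M ≃[L] M, (∀ x ∈ N, g x = x) → g ∈ AutE pE a)
    (b : ιb → SolT pS bp) (hιb : #ιb < κ) (hV : #V < κ) :
    IsClosed (Set.range (ind (St pE a N b))) := by
  classical
  obtain ⟨Θ, hΘ⟩ := class_typeDef κ pE a hM hγ N hN hNdcl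
  have hτ : #(↥N ⊕ ιb × V) < κ := sum_mk_lt κ hM.1 hN (prod_mk_lt κ hM.1 hιb hV)
  set t : ↥N ⊕ ιb × V → M := ttup N b with htdef
  have htN : ∀ n : ↥N, t (Sum.inl n) = (n : M) := fun n => rfl
  apply isClosed_of_closure_subset
  intro χ hχ
  -- names for index types
  set mval : ((↥N ⊕ ιb × V) ⊕ (↥N ⊕ ιb × V)) → (((↥N ⊕ ιb × V) ⊕ γ) ⊕ (↥N ⊕ ιb × V)) :=
    Sum.map Sum.inl id with hmval
  set mP2 : (γ ⊕ ↥N) → (((↥N ⊕ ιb × V) ⊕ γ) ⊕ (↥N ⊕ ιb × V)) :=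
    Sum.elim (fun i => Sum.inl (Sum.inr i)) (fun n => Sum.inr (Sum.inl n)) with hmP2
  set mP3 : (γ ⊕ ↥N) → (((↥N ⊕ ιb × V) ⊕ γ) ⊕ (↥N ⊕ ιb × V)) :=
    Sum.elim (fun i => Sum.inl (Sum.inr i)) (fun n => Sum.inl (Sum.inl (Sum.inl n))) with hmP3
  set Ffun : L.Formula ((↥N ⊕ ιb × V) ⊕ (↥N ⊕ ιb × V)) →
      L.Formula ((((↥N ⊕ ιb × V) ⊕ γ) ⊕ (↥N ⊕ ιb × V))) :=
    fun φ => if χ φ = true then φ.relabel mval else φ.not.relabel mval with hFfun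
  set p' : Set (L.Formula ((((↥N ⊕ ιb × V) ⊕ γ) ⊕ (↥N ⊕ ιb × V)))) :=
    (Set.range Ffun ∪ ((fun ϑ : L.Formula (γ ⊕ ↥N) => ϑ.relabel mP2) '' Θ)) ∪
      ((fun ϑ : L.Formula (γ ⊕ ↥N) => ϑ.relabel mP3) '' Θ) with hp'
  -- realize computations
  have kval : ∀ (v'' : (↥N ⊕ ιb × V) ⊕ γ → M) (φ : L.Formula ((↥N ⊕ ιb × V) ⊕ (↥N ⊕ ιb × V))),
      (φ.relabel mval).Realize (Sum.elim v'' t) ↔ φ.Realize (Sum.elim (v'' ∘ Sum.inl) t) := by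
    intro v'' φ
    rw [FirstOrder.Language.Formula.realize_relabel]
    have h : Sum.elim v'' t ∘ mval = Sum.elim (v'' ∘ Sum.inl) t := by
      funext x; cases x <;> rfl
    rw [h]
  have kP2 : ∀ (v'' : (↥N ⊕ ιb × V) ⊕ γ → M) (ϑ : L.Formula (γ ⊕ ↥N)),
      (ϑ.relabel mP2).Realize (Sum.elim v'' t) ↔
        ϑ.Realize (Sum.elim (v'' ∘ Sum.inr) (Subtype.val : ↥N → M)) := by
    intro v'' ϑ
    rw [FirstOrder.Language.Formula.realize_relabel]
    have h : Sum.elim v'' t ∘ mP2 = Sum.elim (v'' ∘ Sum.inr) (Subtype.val : ↥N → M) := by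
      funext x; cases x <;> rfl
    rw [h]
  have kP3 : ∀ (v'' : (↥N ⊕ ιb × V) ⊕ γ → M) (ϑ : L.Formula (γ ⊕ ↥N)),
      (ϑ.relabel mP3).Realize (Sum.elim v'' t) ↔
        ϑ.Realize (Sum.elim (v'' ∘ Sum.inr) (fun n : ↥N => v'' (Sum.inl (Sum.inl n)))) := by
    intro v'' ϑ
    rw [FirstOrder.Language.Formula.realize_relabel]
    have h : Sum.elim v'' t ∘ mP3 =
        Sum.elim (v'' ∘ Sum.inr) (fun n : ↥N => v'' (Sum.inl (Sum.inl n))) := by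
      funext x; cases x <;> rfl
    rw [h]
  -- the value of χ at left-only formulas
  have hLeft : ∀ (θ : L.Formula (↥N ⊕ ιb × V)) (g : Ge pE a),
      θ.relabel (Sum.inl : _ → (↥N ⊕ ιb × V) ⊕ (↥N ⊕ ιb × V)) ∈ tpOver t (g • t)
        ↔ θ.Realize t := by
    intro θ g
    show (θ.relabel (Sum.inl : _ → (↥N ⊕ ιb × V) ⊕ (↥N ⊕ ιb × V))).Realize (Sum.elim (g • t) t)
      ↔ _
    rw [FirstOrder.Language.Formula.realize_relabel]
    have h : Sum.elim (g • t) t ∘ Sum.inl = fun i => (g : M ≃[L] M) (t i) := by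
      funext i; exact ge_smul_apply pE a g t i
    rw [h]
    exact realize_aut ((g : M ≃[L] M))
  have hχleft : ∀ θ : L.Formula (↥N ⊕ ιb × V),
      (θ.Realize t → χ (θ.relabel Sum.inl) = true) ∧
        (¬ θ.Realize t → χ (θ.relabel Sum.inl) = false) := by
    intro θ
    constructor
    · intro hre
      have hsub : Set.range (ind (St pE a N b)) ⊆
          {χ' | χ' (θ.relabel Sum.inl) = true} := by
        rintro _ ⟨q, rfl⟩
        obtain ⟨g, hg⟩ := q.2
        show ((q : Set (L.Formula ((↥N ⊕ ιb × V) ⊕ (↥N ⊕ ιb × V))))).boolIndicator (θ.relabel Sum.inl) = true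
        have hg' : tpOver t (g • t) = q.1 := hg
        rw [← hg']
        exact ((tpOver t (g • t)).mem_iff_boolIndicator _).mp ((hLeft θ g).mpr hre)
      have hclosed : IsClosed {χ' : L.Formula ((↥N ⊕ ιb × V) ⊕ (↥N ⊕ ιb × V)) → Bool |
          χ' (θ.relabel Sum.inl) = true} := by
        have heq : {χ' : L.Formula ((↥N ⊕ ιb × V) ⊕ (↥N ⊕ ιb × V)) → Bool |
            χ' (θ.relabel Sum.inl) = true} =
          (fun χ' : L.Formula ((↥N ⊕ ιb × V) ⊕ (↥N ⊕ ιb × V)) → Bool =>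
            χ' (θ.relabel Sum.inl)) ⁻¹' ({true} : Set Bool) := rfl
        rw [heq]
        exact (isClosed_discrete _).preimage (continuous_apply _)
      exact closure_minimal hsub hclosed hχ
    · intro hre
      have hsub : Set.range (ind (St pE a N b)) ⊆
          {χ' | χ' (θ.relabel Sum.inl) = false} := by
        rintro _ ⟨q, rfl⟩
        obtain ⟨g, hg⟩ := q.2
        show ((q : Set (L.Formula ((↥N ⊕ ιb × V) ⊕ (↥N ⊕ ιb × V))))).boolIndicator (θ.relabel Sum.inl) = false
        have hg' : tpOver t (g • t) = q.1 := hg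
        rw [← hg']
        exact ((tpOver t (g • t)).notMem_iff_boolIndicator _).mp
          (fun hm => hre ((hLeft θ g).mp hm))
      have hclosed : IsClosed {χ' : L.Formula ((↥N ⊕ ιb × V) ⊕ (↥N ⊕ ιb × V)) → Bool |
          χ' (θ.relabel Sum.inl) = false} := by
        have heq : {χ' : L.Formula ((↥N ⊕ ιb × V) ⊕ (↥N ⊕ ιb × V)) → Bool |
            χ' (θ.relabel Sum.inl) = false} =
          (fun χ' : L.Formula ((↥N ⊕ ιb × V) ⊕ (↥N ⊕ ιb × V)) → Bool =>
            χ' (θ.relabel Sum.inl)) ⁻¹' ({false} : Set Bool) := rfl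
        rw [heq]
        exact (isClosed_discrete _).preimage (continuous_apply _)
      exact closure_minimal hsub hclosed hχ
  -- membership of images of `a` in the class
  have haclass : a ∈ Fclass (M := M) pE a := hE.refl a
  have hgaclass : ∀ g : Ge pE a, (fun i => (g : M ≃[L] M) (a i)) ∈ Fclass (M := M) pE a := by
    intro g
    have hstab : (g : M ≃[L] M) • Fclass (M := M) pE a = Fclass pE a :=
      MulAction.mem_stabilizer_iff.mp g.2
    rw [← hstab]
    exact ⟨a, haclass, rfl⟩
  -- finite satisfiability of p'
  have hfinSat : ∀ q₀ : Finset (L.Formula ((((↥N ⊕ ιb × V) ⊕ γ) ⊕ (↥N ⊕ ιb × V)))),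
      ↑q₀ ⊆ p' → ∃ v : ((↥N ⊕ ιb × V) ⊕ γ) → M,
        ∀ ψ ∈ (q₀ : Set (L.Formula ((((↥N ⊕ ιb × V) ⊕ γ) ⊕ (↥N ⊕ ιb × V))))),
          ψ.Realize (Sum.elim v t) := by
    intro q₀ hq₀
    have hsel : ∀ ψ : L.Formula ((((↥N ⊕ ιb × V) ⊕ γ) ⊕ (↥N ⊕ ιb × V))),
        ∃ φ : L.Formula ((↥N ⊕ ιb × V) ⊕ (↥N ⊕ ιb × V)),
          (∃ φ', Ffun φ' = ψ) → Ffun φ = ψ := by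
      intro ψ
      by_cases h : ∃ φ', Ffun φ' = ψ
      · exact ⟨h.choose, fun _ => h.choose_spec⟩
      · exact ⟨⊤, fun h' => absurd h' h⟩
    choose sel hsel using hsel
    set F₀ : Finset (L.Formula ((↥N ⊕ ιb × V) ⊕ (↥N ⊕ ιb × V))) := q₀.image sel with hF₀
    set O : Set (L.Formula ((↥N ⊕ ιb × V) ⊕ (↥N ⊕ ιb × V)) → Bool) :=
      ⋂ φ ∈ F₀, {χ' | χ' φ = χ φ} with hO
    have hOopen : IsOpen O := by
      apply isOpen_biInter_finset
      intro φ _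
      have heq : {χ' : L.Formula ((↥N ⊕ ιb × V) ⊕ (↥N ⊕ ιb × V)) → Bool | χ' φ = χ φ} =
        (fun χ' : L.Formula ((↥N ⊕ ιb × V) ⊕ (↥N ⊕ ιb × V)) → Bool =>
          χ' φ) ⁻¹' ({χ φ} : Set Bool) := rfl
      rw [heq]
      exact (isOpen_discrete _).preimage (continuous_apply φ)
    have hχO : χ ∈ O := Set.mem_iInter₂.mpr (fun φ _ => rfl)
    obtain ⟨x, hxO, hxr⟩ := mem_closure_iff.mp hχ O hOopen hχO
    obtain ⟨q, rfl⟩ := hxr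
    obtain ⟨g, hg⟩ := q.2
    have hg' : tpOver t (g • t) = q.1 := hg
    have hagree : ∀ φ ∈ F₀, ((q : Set _)).boolIndicator φ = χ φ :=
      fun φ hφ => Set.mem_iInter₂.mp hxO φ hφ
    refine ⟨Sum.elim (g • t) (fun i => (g : M ≃[L] M) (a i)), ?_⟩
    intro ψ hψ
    set w : ((↥N ⊕ ιb × V) ⊕ γ) → M := Sum.elim (g • t) (fun i => (g : M ≃[L] M) (a i))
      with hwdef
    have hwinl : w ∘ Sum.inl = g • t := rfl
    have hwinr : w ∘ Sum.inr = fun i => (g : M ≃[L] M) (a i) := rfl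
    rcases hq₀ hψ with (hcase | hcase) | hcase
    · -- from the pattern χ
      rcases hcase with ⟨φ', hφ'⟩
      have hFs : Ffun (sel ψ) = ψ := hsel ψ ⟨φ', hφ'⟩
      have hmem : sel ψ ∈ F₀ := Finset.mem_image_of_mem sel hψ
      have hag := hagree (sel ψ) hmem
      by_cases hc : χ (sel ψ) = true
      · have hFeq : Ffun (sel ψ) = (sel ψ).relabel mval := by rw [hFfun]; simp only [hc, if_pos]
        have hmem2 : sel ψ ∈ tpOver t (g • t) := by
          rw [(tpOver t (g • t)).mem_iff_boolIndicator]
          rw [hg']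
          rw [hag, hc]
        have hre : (sel ψ).Realize (Sum.elim (g • t) t) := hmem2
        rw [← hFs, hFeq]
        rw [kval w (sel ψ), hwinl]
        exact hre
      · have hcf : χ (sel ψ) = false := by
          cases hx : χ (sel ψ)
          · rfl
          · exact absurd hx hc
        have hFeq : Ffun (sel ψ) = (sel ψ).not.relabel mval := by
          rw [hFfun]; simp only [hcf]; simp
        have hmem2 : sel ψ ∉ tpOver t (g • t) := by
          rw [(tpOver t (g • t)).notMem_iff_boolIndicator]
          rw [hg']
          rw [hag, hcf]
        have hre : ¬ (sel ψ).Realize (Sum.elim (g • t) t) := hmem2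
        rw [← hFs, hFeq]
        rw [kval w (sel ψ).not, hwinl]
        exact FirstOrder.Language.Formula.realize_not.mpr hre
    · -- Θ over N
      rcases hcase with ⟨ϑ, hϑ, rfl⟩
      rw [kP2 w ϑ, hwinr]
      exact (hΘ _).mp (hgaclass g) ϑ hϑ
    · -- Θ over the image of N
      rcases hcase with ⟨ϑ, hϑ, rfl⟩
      rw [kP3 w ϑ]
      have h : Sum.elim (w ∘ Sum.inr) (fun n : ↥N => w (Sum.inl (Sum.inl n)))
          = fun j => (g : M ≃[L] M) (Sum.elim a (Subtype.val : ↥N → M) j) := by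
        funext x
        cases x with
        | inl i => rfl
        | inr n => exact ge_smul_apply pE a g t (Sum.inl n)
      rw [h, realize_aut ((g : M ≃[L] M))]
      exact (hΘ a).mp haclass ϑ hϑ
  -- saturation
  obtain ⟨v'', hv''⟩ := hM.2.2 ((↥N ⊕ ιb × V) ⊕ γ) (↥N ⊕ ιb × V) t p'
    (sum_mk_lt κ hM.1 hτ hγ) hτ hfinSat
  set v : (↥N ⊕ ιb × V) → M := v'' ∘ Sum.inl with hvdef
  set wγ : γ → M := v'' ∘ Sum.inr with hwγdef
  have hP1 : ∀ φ : L.Formula ((↥N ⊕ ιb × V) ⊕ (↥N ⊕ ιb × V)),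
      (χ φ = true → φ.Realize (Sum.elim v t)) ∧
        (χ φ = false → ¬ φ.Realize (Sum.elim v t)) := by
    intro φ
    constructor
    · intro hc
      have hmem : Ffun φ ∈ p' := Or.inl (Or.inl ⟨φ, rfl⟩)
      have := hv'' (Ffun φ) hmem
      rw [hFfun] at this
      simp only [hc, if_pos] at this
      rw [kval v'' φ] at this
      exact this
    · intro hc
      have hmem : Ffun φ ∈ p' := Or.inl (Or.inl ⟨φ, rfl⟩)
      have := hv'' (Ffun φ) hmem
      rw [hFfun] at this
      simp only [hc] at this
      simp only [Bool.false_eq_true, if_false] at this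
      rw [kval v'' φ.not] at this
      exact FirstOrder.Language.Formula.realize_not.mp this
  have hsame : SameTp (L := L) (M := M) t v := by
    intro θ
    by_cases hre : θ.Realize t
    · have hc := (hχleft θ).1 hre
      have := (hP1 (θ.relabel Sum.inl)).1 hc
      rw [FirstOrder.Language.Formula.realize_relabel] at this
      have h : Sum.elim v t ∘ Sum.inl = v := rfl
      rw [h] at this
      exact iff_of_true hre this
    · have hc := (hχleft θ).2 hre
      have := (hP1 (θ.relabel Sum.inl)).2 hc
      rw [FirstOrder.Language.Formula.realize_relabel] at this
      have h : Sum.elim v t ∘ Sum.inl = v := rfl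
      rw [h] at this
      exact iff_of_false hre this
  obtain ⟨f, hf⟩ := hM.2.1 (↥N ⊕ ιb × V) t v hτ hsame
  -- wγ lies in the class and in its image under f
  have hw1 : wγ ∈ Fclass (M := M) pE a := by
    apply (hΘ wγ).mpr
    intro ϑ hϑ
    have hmem : ϑ.relabel mP2 ∈ p' := Or.inl (Or.inr ⟨ϑ, hϑ, rfl⟩)
    have := hv'' (ϑ.relabel mP2) hmem
    rw [kP2 v'' ϑ] at this
    exact this
  have hw2 : wγ ∈ f • Fclass (M := M) pE a := by
    refine ⟨fun i => f⁻¹ (wγ i), ?_, funext fun i => aut_apply_inv f (wγ i)⟩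
    apply (hΘ _).mpr
    intro ϑ hϑ
    have hmem : ϑ.relabel mP3 ∈ p' := Or.inr ⟨ϑ, hϑ, rfl⟩
    have h3 := hv'' (ϑ.relabel mP3) hmem
    rw [kP3 v'' ϑ] at h3
    have heq : Sum.elim (v'' ∘ Sum.inr) (fun n : ↥N => v'' (Sum.inl (Sum.inl n)))
        = fun j => f (Sum.elim (fun i => f⁻¹ (wγ i)) (Subtype.val : ↥N → M) j) := by
      funext x
      cases x with
      | inl i => exact (aut_apply_inv f (wγ i)).symm
      | inr n =>
        show v'' (Sum.inl (Sum.inl n)) = f ((n : M))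
        have : v'' (Sum.inl (Sum.inl n)) = v (Sum.inl n) := rfl
        rw [this, ← hf (Sum.inl n)]
        rfl
    rw [heq] at h3
    exact (realize_aut f).mp h3
  have hfAutE : f ∈ AutE pE a := mem_AutE_of_witness pE a hE f hw1 hw2
  -- conclude
  have hmemSt : tpOver t ((⟨f, hfAutE⟩ : Ge pE a) • t) ∈ St pE a N b :=
    ⟨(⟨f, hfAutE⟩ : Ge pE a), rfl⟩
  refine Set.mem_range.mpr ⟨⟨tpOver t ((⟨f, hfAutE⟩ : Ge pE a) • t), hmemSt⟩, ?_⟩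
  have hft : (⟨f, hfAutE⟩ : Ge pE a) • t = v := funext fun i => hf i
  funext φ
  show (tpOver t ((⟨f, hfAutE⟩ : Ge pE a) • t)).boolIndicator φ = χ φ
  rw [hft]
  cases hc : χ φ with
  | true =>
    exact ((tpOver t v).mem_iff_boolIndicator φ).mp ((hP1 φ).1 hc)
  | false =>
    exact ((tpOver t v).notMem_iff_boolIndicator φ).mp ((hP1 φ).2 hc)

end Aux12c

section Aux12d

variable {γ : Type u} (pE : Set (L.Formula (γ ⊕ γ))) (a : γ → M)
variable {V β : Type u} {pS : Set (L.Formula (V ⊕ β))} {bp : β → M} {ιb : Type u}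

theorem exists_decomp (hM : IsMonster κ L M) {ι : Type u} (hι : #ι < κ) (t : ι → M)
    (hdcl : ∀ f : M ≃[L] M, (∀ i, f (t i) = t i) → f ∈ AutE pE a)
    {g g' : Ge pE a} (h : tpOver (L := L) t (g • t) = tpOver t (g' • t)) :
    ∃ f u : Ge pE a, (∀ i, (f : M ≃[L] M) (t i) = t i) ∧
      (∀ i, (u : M ≃[L] M) (t i) = t i) ∧ g' = f * g * u⁻¹ := by
  have hsame : SameTp (L := L) (M := M) (Sum.elim (g • t) t) (Sum.elim (g' • t) t) := by
    intro φ
    exact Set.ext_iff.mp h φ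
  obtain ⟨f₀, hf₀⟩ := hM.2.1 (ι ⊕ ι) _ _ (sum_mk_lt κ hM.1 hι hι) hsame
  have hfix : ∀ i, f₀ (t i) = t i := fun i => hf₀ (Sum.inr i)
  have hmap : ∀ i, f₀ ((g : M ≃[L] M) (t i)) = (g' : M ≃[L] M) (t i) :=
    fun i => hf₀ (Sum.inl i)
  set fG : Ge pE a := ⟨f₀, hdcl f₀ hfix⟩ with hfG
  refine ⟨fG, g'⁻¹ * fG * g, hfix, ?_, ?_⟩
  · intro i
    have h1 : ((g'⁻¹ * fG * g : Ge pE a) : M ≃[L] M) (t i)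
        = ((g'⁻¹ : Ge pE a) : M ≃[L] M) (f₀ ((g : M ≃[L] M) (t i))) := rfl
    rw [h1, hmap i]
    have hcoe : ((g'⁻¹ : Ge pE a) : M ≃[L] M) = ((g' : Ge pE a) : M ≃[L] M)⁻¹ := rfl
    rw [hcoe]
    exact aut_inv_apply _ _
  · group

theorem fixN_mem_AutfL (N : L.ElementarySubstructure M) (hN : #N < κ)
    (hNdcl : ∀ g : M ≃[L] M, (∀ x ∈ N, g x = x) → g ∈ AutE pE a)
    {f : Ge pE a} (hf : ∀ x ∈ N, (f : M ≃[L] M) x = x) : f ∈ AutfL κ pE a :=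
  Subgroup.subset_normalClosure ⟨N, hN, hNdcl, hf⟩

theorem fixb_mem_AutfLS (hInv : SolInv pE a pS bp) {b : ιb → SolT pS bp}
    (hb : IsLascarTuple κ pE a hInv b)
    {f : Ge pE a} (hf : ∀ i, (f : M ≃[L] M) (flat b i) = flat b i) :
    toGS pE a hInv f ∈ AutfLS κ pE a hInv := by
  apply (hb.2 _).mpr
  rw [flat_toGS_smul]
  have h : f • flat b = flat b := funext fun i => hf i
  rw [h]
  exact LEq.refl κ pE a _

theorem projT_eq_aux (hM : IsMonster κ L M) {ι : Type u} (hι : #ι < κ) (t : ι → M)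
    (hdcl : ∀ f : M ≃[L] M, (∀ i, f (t i) = t i) → f ∈ AutE pE a)
    (hfix : ∀ f : Ge pE a, (∀ i, (f : M ≃[L] M) (t i) = t i) → f ∈ AutfL κ pE a)
    {g g' : Ge pE a} (h : tpOver (L := L) t (g • t) = tpOver t (g' • t)) :
    projT κ pE a g = projT κ pE a g' := by
  obtain ⟨f, u, hf, hu, hdec⟩ := exists_decomp κ pE a hM hι t hdcl h
  show (QuotientGroup.mk g : Ge pE a ⧸ AutfL κ pE a) = QuotientGroup.mk g'
  rw [QuotientGroup.eq, hdec]
  have heq : g⁻¹ * (f * g * u⁻¹) = (g⁻¹ * f * g) * u⁻¹ := by group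
  rw [heq]
  refine mul_mem ?_ (inv_mem (hfix u hu))
  have := (AutfL_normal κ pE a).conj_mem f (hfix f hf) g⁻¹
  simpa using this

theorem projS_eq_aux (hM : IsMonster κ L M) (hInv : SolInv pE a pS bp) {ι : Type u}
    (hι : #ι < κ) (t : ι → M)
    (hdcl : ∀ f : M ≃[L] M, (∀ i, f (t i) = t i) → f ∈ AutE pE a)
    (hfix : ∀ f : Ge pE a, (∀ i, (f : M ≃[L] M) (t i) = t i) →
      toGS pE a hInv f ∈ AutfLS κ pE a hInv)
    {g g' : Ge pE a} (h : tpOver (L := L) t (g • t) = tpOver t (g' • t)) :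
    projS κ pE a hInv g = projS κ pE a hInv g' := by
  obtain ⟨f, u, hf, hu, hdec⟩ := exists_decomp κ pE a hM hι t hdcl h
  show (QuotientGroup.mk (toGS pE a hInv g) : GS pE a hInv ⧸ AutfLS κ pE a hInv)
    = QuotientGroup.mk (toGS pE a hInv g')
  rw [QuotientGroup.eq, hdec, map_mul, map_mul, map_inv]
  have heq : (toGS pE a hInv g)⁻¹ *
      (toGS pE a hInv f * toGS pE a hInv g * (toGS pE a hInv u)⁻¹)
      = ((toGS pE a hInv g)⁻¹ * toGS pE a hInv f * toGS pE a hInv g)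
        * (toGS pE a hInv u)⁻¹ := by group
  rw [heq]
  refine mul_mem ?_ (inv_mem (hfix u hu))
  have := (AutfLS_normal κ pE a hInv).conj_mem _ (hfix f hf) (toGS pE a hInv g)⁻¹
  simpa using this

theorem nuT_eval (hM : IsMonster κ L M) (N : L.ElementarySubstructure M) (hN : #N < κ)
    (hNdcl : ∀ g : M ≃[L] M, (∀ x ∈ N, g x = x) → g ∈ AutE pE a)
    {p : ↥(SMod pE a N)} {g : Ge pE a}
    (hp : (p : Set (L.Formula (↥N ⊕ ↥N)))
      = tpOver (Subtype.val : ↥N → M) (g • (Subtype.val : ↥N → M))) :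
    nuT κ pE a N p = projT κ pE a g := by
  have hch : tpOver (Subtype.val : ↥N → M)
      ((Set.mem_range.mp p.2).choose • (Subtype.val : ↥N → M)) = p.1 :=
    (Set.mem_range.mp p.2).choose_spec
  show projT κ pE a (Set.mem_range.mp p.2).choose = projT κ pE a g
  exact projT_eq_aux κ pE a hM hN (Subtype.val : ↥N → M)
    (fun f hfix => hNdcl f (fun x hx => hfix ⟨x, hx⟩))
    (fun f hfix => fixN_mem_AutfL κ pE a N hN hNdcl (fun x hx => hfix ⟨x, hx⟩))
    (hch.trans hp)

theorem nub_eval (hM : IsMonster κ L M) (hInv : SolInv pE a pS bp) {b : ιb → SolT pS bp}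
    (hb : IsLascarTuple κ pE a hInv b) (hbdcl : eInDclTuple pE a (flat b)) (hV : #V < κ)
    {p : ↥(Sb pE a b)} {g : Ge pE a}
    (hp : (p : Set (L.Formula ((ιb × V) ⊕ (ιb × V)))) = tpOver (flat b) (g • flat b)) :
    nub κ pE a hInv b p = projS κ pE a hInv g := by
  have hch : tpOver (flat b) ((Set.mem_range.mp p.2).choose • flat b) = p.1 :=
    (Set.mem_range.mp p.2).choose_spec
  show projS κ pE a hInv (Set.mem_range.mp p.2).choose = projS κ pE a hInv g
  exact projS_eq_aux κ pE a hM hInv (prod_mk_lt κ hM.1 hb.1 hV) (flat b)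
    hbdcl
    (fun f hfix => fixb_mem_AutfLS κ pE a hInv hb hfix)
    (hch.trans hp)

theorem xiL_projT (hInv : SolInv pE a pS bp) (g : Ge pE a) :
    xiL κ pE a hInv (projT κ pE a g) = projS κ pE a hInv g := by
  haveI := AutfLS_normal κ pE a hInv
  show (QuotientGroup.map (AutfL κ pE a) (AutfLS κ pE a hInv) (toGS pE a hInv)
    (fun _ hf => Subgroup.mem_comap.mpr (toGS_mem_autfLS κ pE a hInv hf)))
      (QuotientGroup.mk g) = QuotientGroup.mk (toGS pE a hInv g)
  rw [QuotientGroup.map_mk]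

end Aux12d

section Statements

variable {γ : Type u} (pE : Set (L.Formula (γ ⊕ γ))) (a : γ → M)
variable {V β : Type u} {pS : Set (L.Formula (V ⊕ β))} {bp : β → M}


/-- Theorem 2.18(1): assuming `e ∈ dcl(Σ)`, the closure of
the trivial subgroup of `Gal_L(Σ, e)` equals
`Autf_KP(Σ, e)/Autf_L(Σ, e)`. -/
theorem closure_one_eq_autfKPS (hM : IsMonster κ L M) (hγ : #γ < κ)
    (hE : Equivalence (Frel (M := M) pE)) (hV : #V < κ) (hβ : #β < κ)
    (hInv : SolInv pE a pS bp)
    (hedcl : eInDclSigma κ pE a pS bp)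
    {ιb : Type u} (b : ιb → SolT pS bp)
    (hb : IsLascarTuple κ pE a hInv b) (hbdcl : eInDclTuple pE a (flat b))
    (N : L.ElementarySubstructure M) (hN : #N < κ)
    (hNdcl : ∀ g : M ≃[L] M, (∀ x ∈ N, g x = x) → g ∈ AutE pE a) :
    @closure _ (galTopb κ pE a hInv b) {projb κ pE a hInv 1} =
      projb κ pE a hInv '' AutfKPSset κ pE a hInv N := by
  classical
  -- topologies and instances
  letI tSN : TopologicalSpace ↥(SMod pE a N) := typeSetTop (SMod pE a N)
  letI tSb : TopologicalSpace ↥(Sb pE a b) := typeSetTop (Sb pE a b)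
  letI tSt : TopologicalSpace ↥(St pE a N b) := typeSetTop (St pE a N b)
  letI tGT : TopologicalSpace (GalT κ pE a) := galTopT κ pE a N
  letI tGb : TopologicalSpace (GalL κ pE a hInv) := galTopb κ pE a hInv b
  haveI hT2N : T2Space ↥(SMod pE a N) := t2_typeSetTop (SMod pE a N)
  haveI hT2b : T2Space ↥(Sb pE a b) := t2_typeSetTop (Sb pE a b)
  haveI hCSt : CompactSpace ↥(St pE a N b) :=
    compactSpace_of_isClosed_range_ind (St pE a N b)
      (isClosed_range_ind_St κ pE a hM hγ hE N hN hNdcl b hb.1 hV)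
  have hcontN : Continuous (resN pE a N b) :=
    continuous_restr_map (St pE a N b) (SMod pE a N) (resN pE a N b)
      (fun φ => φ.relabel (Sum.map Sum.inl Sum.inl)) (fun q φ => Iff.rfl)
  have hcontb : Continuous (resb pE a N b) :=
    continuous_restr_map (St pE a N b) (Sb pE a b) (resb pE a N b)
      (fun φ => φ.relabel (Sum.map Sum.inr Sum.inr)) (fun q φ => Iff.rfl)
  have hcont_nuT : Continuous (nuT κ pE a N) := continuous_coinduced_rng
  -- witnesses
  have hwit : ∀ q : ↥(St pE a N b), ∃ g : Ge pE a,
      (q : Set (L.Formula ((↥N ⊕ ιb × V) ⊕ (↥N ⊕ ιb × V)))) = tpOver (ttup N b) (g • ttup N b) :=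
    fun q => ((Set.mem_range.mp q.2).imp fun g h => h.symm)
  have hwitb : ∀ p : ↥(Sb pE a b), ∃ g : Ge pE a,
      (p : Set (L.Formula ((ιb × V) ⊕ (ιb × V)))) = tpOver (flat b) (g • flat b) :=
    fun p => ((Set.mem_range.mp p.2).imp fun g h => h.symm)
  have hwitN : ∀ p : ↥(SMod pE a N), ∃ g : Ge pE a,
      (p : Set (L.Formula (↥N ⊕ ↥N))) = tpOver (Subtype.val : ↥N → M) (g • (Subtype.val : ↥N → M)) :=
    fun p => ((Set.mem_range.mp p.2).imp fun g h => h.symm)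
  -- evaluation of restrictions
  have hresN_val : ∀ (q : ↥(St pE a N b)) (g : Ge pE a),
      (q : Set (L.Formula ((↥N ⊕ ιb × V) ⊕ (↥N ⊕ ιb × V)))) = tpOver (ttup N b) (g • ttup N b) →
      ((resN pE a N b q : Set (L.Formula (↥N ⊕ ↥N)))
        = tpOver (Subtype.val : ↥N → M) (g • (Subtype.val : ↥N → M))) := by
    intro q g hq
    show restr (Sum.inl : ↥N → ↥N ⊕ ιb × V) (q : Set (L.Formula ((↥N ⊕ ιb × V) ⊕ (↥N ⊕ ιb × V)))) = _
    rw [hq]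
    exact restr_tpOver pE a Sum.inl (ttup N b) (Subtype.val : ↥N → M) (fun i => rfl) g
  have hresb_val : ∀ (q : ↥(St pE a N b)) (g : Ge pE a),
      (q : Set (L.Formula ((↥N ⊕ ιb × V) ⊕ (↥N ⊕ ιb × V)))) = tpOver (ttup N b) (g • ttup N b) →
      ((resb pE a N b q : Set (L.Formula ((ιb × V) ⊕ (ιb × V)))) = tpOver (flat b) (g • flat b)) := by
    intro q g hq
    show restr (Sum.inr : ιb × V → ↥N ⊕ ιb × V) (q : Set (L.Formula ((↥N ⊕ ιb × V) ⊕ (↥N ⊕ ιb × V)))) = _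
    rw [hq]
    exact restr_tpOver pE a Sum.inr (ttup N b) (flat b) (fun i => rfl) g
  have hnuT_q : ∀ (q : ↥(St pE a N b)) (g : Ge pE a),
      (q : Set (L.Formula ((↥N ⊕ ιb × V) ⊕ (↥N ⊕ ιb × V)))) = tpOver (ttup N b) (g • ttup N b) →
      nuT κ pE a N (resN pE a N b q) = projT κ pE a g :=
    fun q g hq => nuT_eval κ pE a hM N hN hNdcl (hresN_val q g hq)
  have hnub_q : ∀ (q : ↥(St pE a N b)) (g : Ge pE a),
      (q : Set (L.Formula ((↥N ⊕ ιb × V) ⊕ (↥N ⊕ ιb × V)))) = tpOver (ttup N b) (g • ttup N b) →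
      nub κ pE a hInv b (resb pE a N b q) = projS κ pE a hInv g :=
    fun q g hq => nub_eval κ pE a hM hInv hb hbdcl hV (hresb_val q g hq)
  have hnub_p : ∀ (p : ↥(Sb pE a b)) (g : Ge pE a),
      (p : Set (L.Formula ((ιb × V) ⊕ (ιb × V)))) = tpOver (flat b) (g • flat b) →
      nub κ pE a hInv b p = projS κ pE a hInv g :=
    fun p g hp => nub_eval κ pE a hM hInv hb hbdcl hV hp
  have hnuT_p : ∀ (p : ↥(SMod pE a N)) (g : Ge pE a),
      (p : Set (L.Formula (↥N ⊕ ↥N))) = tpOver (Subtype.val : ↥N → M) (g • (Subtype.val : ↥N → M)) →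
      nuT κ pE a N p = projT κ pE a g :=
    fun p g hp => nuT_eval κ pE a hM N hN hNdcl hp
  -- continuity of ξ_L
  have hopen : ∀ o : Set (GalL κ pE a hInv), IsOpen o →
      IsOpen (xiL κ pE a hInv ⁻¹' o) := by
    intro o ho
    have hob : IsOpen (nub κ pE a hInv b ⁻¹' o) := isOpen_coinduced.mp ho
    have hKopen : IsOpen (resb pE a N b ⁻¹' (nub κ pE a hInv b ⁻¹' o)) :=
      hob.preimage hcontb
    have hKc : IsCompact (resb pE a N b ⁻¹' (nub κ pE a hInv b ⁻¹' o))ᶜ :=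
      hKopen.isClosed_compl.isCompact
    have himg : IsClosed (resN pE a N b ''
        (resb pE a N b ⁻¹' (nub κ pE a hInv b ⁻¹' o))ᶜ) :=
      (hKc.image hcontN).isClosed
    have hident : nuT κ pE a N ⁻¹' (xiL κ pE a hInv ⁻¹' o)
        = (resN pE a N b '' (resb pE a N b ⁻¹' (nub κ pE a hInv b ⁻¹' o))ᶜ)ᶜ := by
      ext p
      obtain ⟨g, hg⟩ := hwitN p
      simp only [Set.mem_preimage, Set.mem_compl_iff, Set.mem_image]
      constructor
      · intro hmem
        rintro ⟨q, hqKc, hqp⟩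
        obtain ⟨g', hg'⟩ := hwit q
        have hpg' : (p : Set (L.Formula (↥N ⊕ ↥N))) = tpOver (Subtype.val : ↥N → M)
            (g' • (Subtype.val : ↥N → M)) := by
          have h1 := hresN_val q g' hg'
          rw [hqp] at h1
          exact h1
        have h2 : xiL κ pE a hInv (nuT κ pE a N p) = projS κ pE a hInv g' := by
          rw [hnuT_p p g' hpg', xiL_projT κ pE a hInv g']
        have ho' : projS κ pE a hInv g' ∈ o := by rw [← h2]; exact hmem
        apply hqKc
        show resb pE a N b q ∈ nub κ pE a hInv b ⁻¹' o
        rw [Set.mem_preimage, hnub_q q g' hg']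
        exact ho'
      · intro hnot
        have hq : ((⟨tpOver (ttup N b) (g • ttup N b), ⟨g, rfl⟩⟩ : ↥(St pE a N b)) : Set (L.Formula ((↥N ⊕ ιb × V) ⊕ (↥N ⊕ ιb × V))))
            = tpOver (ttup N b) (g • ttup N b) := rfl
        have hrq : resN pE a N b ⟨tpOver (ttup N b) (g • ttup N b), ⟨g, rfl⟩⟩ = p :=
          Subtype.ext (by rw [hresN_val _ g hq]; exact hg.symm)
        have hqK : (⟨tpOver (ttup N b) (g • ttup N b), ⟨g, rfl⟩⟩ : ↥(St pE a N b))
            ∈ resb pE a N b ⁻¹' (nub κ pE a hInv b ⁻¹' o) := by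
          by_contra hqKc
          exact hnot ⟨_, hqKc, hrq⟩
        have h3 : projS κ pE a hInv g ∈ o := by
          have := hqK
          rw [Set.mem_preimage, Set.mem_preimage, hnub_q _ g hq] at this
          exact this
        rw [hnuT_p p g hg, xiL_projT κ pE a hInv g]
        exact h3
    refine isOpen_coinduced.mpr ?_
    rw [hident]
    exact himg.isOpen_compl
  -- step A : the two images agree
  have stepA : projb κ pE a hInv '' AutfKPSset κ pE a hInv N
      = projS κ pE a hInv '' AutfKPset κ pE a N := by
    apply Set.Subset.antisymm
    · rintro _ ⟨σ, hσ, rfl⟩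
      obtain ⟨f, hfKP, hfeq⟩ := hσ ιb hb.1 b
      refine ⟨f, hfKP, ?_⟩
      show (QuotientGroup.mk (toGS pE a hInv f) : GS pE a hInv ⧸ AutfLS κ pE a hInv)
        = QuotientGroup.mk σ
      rw [QuotientGroup.eq]
      apply (hb.2 _).mpr
      have h1 : ((toGS pE a hInv f)⁻¹ * σ) • b = (toGS pE a hInv f)⁻¹ • (σ • b) :=
        mul_smul _ _ _
      rw [h1]
      have h2 : (toGS pE a hInv f)⁻¹ = toGS pE a hInv f⁻¹ := (map_inv _ _).symm
      rw [h2, flat_toGS_smul, ← hfeq, inv_smul_smul]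
      exact LEq.refl κ pE a _
    · rintro _ ⟨f, hfKP, rfl⟩
      refine ⟨toGS pE a hInv f, ?_, rfl⟩
      intro ι hι c
      rw [flat_toGS_smul]
      exact ⟨f, hfKP, rfl⟩
  -- closedness of the image of the closure
  have hXclosed : IsClosed (projS κ pE a hInv '' AutfKPset κ pE a N) := by
    have hCclosed : IsClosed (@closure _ (galTopT κ pE a N) {projT κ pE a 1}) :=
      isClosed_closure
    have hpre2 : IsClosed (resN pE a N b ⁻¹' (nuT κ pE a N ⁻¹'
        (@closure _ (galTopT κ pE a N) {projT κ pE a 1}))) :=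
      (hCclosed.preimage hcont_nuT).preimage hcontN
    have hcomp : IsCompact (resb pE a N b '' (resN pE a N b ⁻¹' (nuT κ pE a N ⁻¹'
        (@closure _ (galTopT κ pE a N) {projT κ pE a 1})))) :=
      (hpre2.isCompact).image hcontb
    have hident : nub κ pE a hInv b ⁻¹' (projS κ pE a hInv '' AutfKPset κ pE a N)
        = resb pE a N b '' (resN pE a N b ⁻¹' (nuT κ pE a N ⁻¹'
          (@closure _ (galTopT κ pE a N) {projT κ pE a 1}))) := by
      ext p
      constructor
      · intro hmem
        obtain ⟨g, hg⟩ := hwitb p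
        rw [Set.mem_preimage, hnub_p p g hg] at hmem
        obtain ⟨h, hhKP, hhS⟩ := hmem
        have hls : (toGS pE a hInv h)⁻¹ * toGS pE a hInv g ∈ AutfLS κ pE a hInv := by
          have hhS' : (QuotientGroup.mk (toGS pE a hInv h) :
              GS pE a hInv ⧸ AutfLS κ pE a hInv) = QuotientGroup.mk (toGS pE a hInv g) :=
            hhS
          exact QuotientGroup.eq.mp hhS'
        obtain ⟨l, hl, hleq⟩ := (hb.2 _).mp hls
        have hσ : (toGS pE a hInv h)⁻¹ * toGS pE a hInv g = toGS pE a hInv (h⁻¹ * g) := by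
          rw [map_mul, map_inv]
        rw [hσ, flat_toGS_smul] at hleq
        have hKPh' : (h * l) ∈ AutfKPset κ pE a N := by
          have hTeq : projT κ pE a (h * l) = projT κ pE a h := by
            show (QuotientGroup.mk (h * l) : Ge pE a ⧸ AutfL κ pE a) = QuotientGroup.mk h
            rw [QuotientGroup.eq]
            have : (h * l)⁻¹ * h = l⁻¹ := by group
            rw [this]
            exact inv_mem hl
          show projT κ pE a (h * l) ∈ @closure _ (galTopT κ pE a N) {projT κ pE a 1}
          rw [hTeq]
          exact hhKP
        have hfb : (h * l) • flat b = g • flat b := by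
          rw [mul_smul, hleq, ← mul_smul]
          have : h * (h⁻¹ * g) = g := by group
          rw [this]
        refine ⟨⟨tpOver (ttup N b) ((h * l) • ttup N b), ⟨h * l, rfl⟩⟩, ?_, ?_⟩
        · show nuT κ pE a N (resN pE a N b ⟨tpOver (ttup N b) ((h * l) • ttup N b),
            ⟨h * l, rfl⟩⟩) ∈ @closure _ (galTopT κ pE a N) {projT κ pE a 1}
          rw [hnuT_q _ (h * l) rfl]
          exact hKPh'
        · apply Subtype.ext
          rw [hresb_val _ (h * l) rfl, hfb]
          exact hg.symm
      · rintro ⟨q, hqmem, rfl⟩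
        obtain ⟨g', hg'⟩ := hwit q
        rw [Set.mem_preimage, hnub_q q g' hg']
        have hmem : projT κ pE a g' ∈ @closure _ (galTopT κ pE a N) {projT κ pE a 1} := by
          have := hqmem
          rw [Set.mem_preimage, Set.mem_preimage, hnuT_q q g' hg'] at this
          exact this
        exact ⟨g', hmem, rfl⟩
    rw [← isOpen_compl_iff]
    refine isOpen_coinduced.mpr ?_
    rw [Set.preimage_compl, hident]
    exact (hcomp.isClosed).isOpen_compl
  -- assemble
  rw [stepA]
  apply Set.Subset.antisymm
  · apply closure_minimal
    · intro x hx
      rw [Set.mem_singleton_iff] at hx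
      subst hx
      refine ⟨1, subset_closure rfl, ?_⟩
      show projb κ pE a hInv (toGS pE a hInv 1) = projb κ pE a hInv 1
      rw [map_one]
    · exact hXclosed
  · rintro _ ⟨g, hgKP, rfl⟩
    rw [mem_closure_iff]
    intro o ho hgo
    have hW : IsOpen (xiL κ pE a hInv ⁻¹' o) := hopen o ho
    have hgW : projT κ pE a g ∈ xiL κ pE a hInv ⁻¹' o := by
      rw [Set.mem_preimage, xiL_projT κ pE a hInv g]
      exact hgo
    have hgC : projT κ pE a g ∈ @closure _ (galTopT κ pE a N) {projT κ pE a 1} := hgKP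
    obtain ⟨y, hyW, hy1⟩ := mem_closure_iff.mp hgC _ hW hgW
    rw [Set.mem_singleton_iff] at hy1
    subst hy1
    rw [Set.mem_preimage, xiL_projT κ pE a hInv 1] at hyW
    have h1 : projS κ pE a hInv 1 = projb κ pE a hInv 1 := by
      show projb κ pE a hInv (toGS pE a hInv 1) = projb κ pE a hInv 1
      rw [map_one]
    rw [h1] at hyW
    exact ⟨projb κ pE a hInv 1, hyW, rfl⟩


end Statements

end RelLascar
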